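/- Let n₂, n₃ be natural numbers and let T₄₂ be an m × n₂ matrix and T₃₁ an n₃ × k matrix over a field F. The subspace {X ∈ Mat(n₂, n₃, F) | T₄₂ * X = 0 and X * T₃₁ = 0} has codimension n₃·rank(T₄₂) + n₂·rank(T₃₁) − rank(T₃₁)·rank(T₄₂) in Mat(n₂, n₃, F). -/

import Mathlib

open Module

/-- The subspace `{X | T₄₂ * X = 0 ∧ X * T₃₁ = 0}` of `Mat(n₂, n₃, F)` has codimension
`n₃·rank T₄₂ + n₂·rank T₃₁ − rank T₃₁ · rank T₄₂`. -/
theorem stmt0 {F : Type*} [Field F] (n₂ n₃ m k : ℕ)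
    (T₄₂ : Matrix (Fin m) (Fin n₂) F) (T₃₁ : Matrix (Fin n₃) (Fin k) F)
    (S : Submodule F (Matrix (Fin n₂) (Fin n₃) F))
    (hS : ∀ X : Matrix (Fin n₂) (Fin n₃) F, X ∈ S ↔ T₄₂ * X = 0 ∧ X * T₃₁ = 0) :
    finrank F (Matrix (Fin n₂) (Fin n₃) F) - finrank F S
      = n₃ * T₄₂.rank + n₂ * T₃₁.rank - T₃₁.rank * T₄₂.rank := by
  classical
  set A : (Fin n₂ → F) →ₗ[F] (Fin m → F) := Matrix.toLin' T₄₂ with hA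
  set B : (Fin k → F) →ₗ[F] (Fin n₃ → F) := Matrix.toLin' T₃₁ with hB
  set K : Submodule F (Fin n₂ → F) := LinearMap.ker A with hK
  set R : Submodule F (Fin n₃ → F) := LinearMap.range B with hR
  -- toLin' agrees with mulVecLin
  have hAeq : A = T₄₂.mulVecLin := LinearMap.ext fun v => by
    simp [hA, Matrix.toLin'_apply, Matrix.mulVecLin_apply]
  have hBeq : B = T₃₁.mulVecLin := LinearMap.ext fun v => by
    simp [hB, Matrix.toLin'_apply, Matrix.mulVecLin_apply]
  -- the linear map from Hom(quotient, K) into matrices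
  let Φ : ((((Fin n₃) → F) ⧸ R) →ₗ[F] K) →ₗ[F] Matrix (Fin n₂) (Fin n₃) F :=
  { toFun := fun g => Matrix.toLin'.symm (K.subtype ∘ₗ (g ∘ₗ R.mkQ))
    map_add' := by
      intro g h
      rw [LinearMap.add_comp, LinearMap.comp_add, map_add]
    map_smul' := by
      intro c g
      rw [LinearMap.smul_comp, LinearMap.comp_smul, map_smul]
      rfl }
  have hΦapp : ∀ g, Matrix.toLin' (Φ g) = K.subtype ∘ₗ (g ∘ₗ R.mkQ) := by
    intro g
    simp [Φ]
  have hΦinj : Function.Injective Φ := by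
    intro g h hgh
    have h2 : K.subtype ∘ₗ (g ∘ₗ R.mkQ) = K.subtype ∘ₗ (h ∘ₗ R.mkQ) := by
      rw [← hΦapp, ← hΦapp, hgh]
    refine LinearMap.ext fun x => ?_
    obtain ⟨y, rfl⟩ := R.mkQ_surjective x
    exact Subtype.ext (LinearMap.congr_fun h2 y)
  have hrange : LinearMap.range Φ = S := by
    ext X
    rw [LinearMap.mem_range, hS]
    constructor
    · rintro ⟨g, rfl⟩
      constructor
      · apply Matrix.toLin'.injective
        rw [Matrix.toLin'_mul, hΦapp, map_zero]
        have hAs : A ∘ₗ K.subtype = 0 := LinearMap.range_le_ker_iff.mp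
          (by rw [Submodule.range_subtype])
        rw [← LinearMap.comp_assoc, hAs, LinearMap.zero_comp]
      · apply Matrix.toLin'.injective
        rw [Matrix.toLin'_mul, hΦapp, map_zero]
        have hmk : R.mkQ ∘ₗ B = 0 := LinearMap.range_le_ker_iff.mp
          (by rw [Submodule.ker_mkQ])
        rw [LinearMap.comp_assoc, LinearMap.comp_assoc, hmk, LinearMap.comp_zero,
          LinearMap.comp_zero]
    · rintro ⟨h1, h2⟩
      set f : (Fin n₃ → F) →ₗ[F] (Fin n₂ → F) := Matrix.toLin' X with hf
      have hfK : ∀ v, f v ∈ K := by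
        intro v
        have : A (f v) = Matrix.toLin' (T₄₂ * X) v := by
          rw [Matrix.toLin'_mul]; rfl
        rw [hK, LinearMap.mem_ker, this, h1, map_zero]
        rfl
      set f' : (Fin n₃ → F) →ₗ[F] K := f.codRestrict K hfK with hf'
      have hRf : R ≤ LinearMap.ker f' := by
        rintro _ ⟨y, rfl⟩
        rw [LinearMap.mem_ker]
        apply Subtype.ext
        have : f (B y) = Matrix.toLin' (X * T₃₁) y := by
          rw [Matrix.toLin'_mul]; rfl
        simpa [hf', LinearMap.codRestrict_apply] using this.trans (by rw [h2, map_zero]; rfl)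
      refine ⟨R.liftQ f' hRf, ?_⟩
      apply Matrix.toLin'.injective
      rw [hΦapp]
      ext v
      simp [hf', LinearMap.codRestrict_apply, Submodule.liftQ_apply, hf]
  -- finrank computations
  have hfin1 : finrank F S = finrank F ((((Fin n₃) → F) ⧸ R) →ₗ[F] K) := by
    rw [← hrange, LinearMap.finrank_range_of_inj hΦinj]
  have hfinHom : finrank F ((((Fin n₃) → F) ⧸ R) →ₗ[F] K)
      = finrank F (((Fin n₃) → F) ⧸ R) * finrank F K := Module.finrank_linearMap F F _ _
  have hrkA : T₄₂.rank = finrank F (LinearMap.range A) := by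
    rw [Matrix.rank, hAeq]
  have hrkB : T₃₁.rank = finrank F R := by
    rw [Matrix.rank, hR, hBeq]
  have hquot : finrank F (((Fin n₃) → F) ⧸ R) + finrank F R = n₃ := by
    have := Submodule.finrank_quotient_add_finrank R
    simpa using this
  have hrn : finrank F (LinearMap.range A) + finrank F K = n₂ := by
    have := LinearMap.finrank_range_add_finrank_ker A
    simpa [hK] using this
  have hdimM : finrank F (Matrix (Fin n₂) (Fin n₃) F) = n₂ * n₃ := by
    simp [Module.finrank_matrix]
  have hb : T₃₁.rank ≤ n₃ := T₃₁.rank_le_height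
  have ha : T₄₂.rank ≤ n₂ := T₄₂.rank_le_width
  have hq : finrank F (((Fin n₃) → F) ⧸ R) = n₃ - T₃₁.rank := by omega
  have hk : finrank F K = n₂ - T₄₂.rank := by omega
  rw [hfin1, hfinHom, hq, hk, hdimM]
  generalize ha2 : T₄₂.rank = a at ha ⊢
  generalize hb2 : T₃₁.rank = b at hb ⊢
  obtain ⟨a', rfl⟩ := Nat.exists_eq_add_of_le ha
  obtain ⟨b', rfl⟩ := Nat.exists_eq_add_of_le hb
  simp only [Nat.add_sub_cancel_left]
  have e1 : (a + a') * (b + b') = b' * a' + (a * b + a * b' + a' * b) := by ring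
  have e2 : (b + b') * a + (a + a') * b = b * a + (a * b' + a' * b + a * b) := by ring
  rw [e1, e2, Nat.add_sub_cancel_left, Nat.add_sub_cancel_left]
  omega
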